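/- Let G = P ⋊ R with P a Sylow p-subgroup and R a Hall p'-subgroup, and let N < P be a minimal normal subgroup of G such that G/N is a Frobenius group with kernel P/N. If N is not a direct factor of P, then for each irreducible character χ of G whose kernel does not contain N, the order of ker χ is coprime to |R|. -/

import Mathlib

open CategoryTheory
open Pointwise

noncomputable def repKer (G : Type) [Group G] (V : FDRep ℂ G) : Subgroup G :=
  MonoidHom.ker (Representation.asGroupHom V.ρ)

noncomputable def cod (G : Type) [Group G] (V : FDRep ℂ G) : ℕ :=
  (repKer G V).index / Module.finrank ℂ V

noncomputable def ncodSet (G : Type) [Group G] : Set ℕ :=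
  { n | ∃ V : FDRep ℂ G, Simple V ∧ 1 < Module.finrank ℂ V ∧ cod G V = n }

def StarGroup (G : Type) [Group G] : Prop :=
  ∃ m n : ℕ, m ≠ n ∧ Nat.Coprime m n ∧ ncodSet G = {m, n}

structure IsFrobeniusWith (G : Type) [Group G] (N H : Subgroup G) : Prop where
  normal : N.Normal
  compl : N.IsComplement' H
  N_ne_bot : N ≠ ⊥
  H_ne_bot : H ≠ ⊥
  frob : ∀ h ∈ H, h ≠ 1 → ∀ n ∈ N, n ≠ 1 → h * n ≠ n * h

def IsFrobenius (G : Type) [Group G] : Prop :=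
  ∃ N H : Subgroup G, IsFrobeniusWith G N H

def IsMinimalNormal (G : Type) [Group G] (N : Subgroup G) : Prop :=
  N.Normal ∧ N ≠ ⊥ ∧ ∀ M : Subgroup G, M.Normal → M ≠ ⊥ → M ≤ N → M = N

def Is2FrobeniusWith (G : Type) [Group G] (K H : Subgroup G) [K.Normal] : Prop :=
  ⊥ < K ∧ K < H ∧ H < ⊤ ∧
    (∃ R : Subgroup (G ⧸ K), IsFrobeniusWith (G ⧸ K) (H.map (QuotientGroup.mk' K)) R) ∧
    (∃ J : Subgroup H, IsFrobeniusWith H (K.subgroupOf H) J)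

def Is2Frobenius (G : Type) [Group G] : Prop :=
  ∃ (K H : Subgroup G) (hK : K.Normal) (_ : H.Normal), @Is2FrobeniusWith G _ K H hK

lemma my_subgroup_eq_of_le_of_card_le {G : Type*} [Group G] {H K : Subgroup G}
    (h : H ≤ K) (hc : Nat.card K ≤ Nat.card H) [Finite G] : H = K := by
  apply SetLike.coe_injective
  refine Set.eq_of_subset_of_ncard_le h ?_ (Set.toFinite _)
  calc (K : Set G).ncard = Nat.card K := (Nat.card_coe_set_eq _).symm
    _ ≤ Nat.card H := hc
    _ = (H : Set G).ncard := Nat.card_coe_set_eq _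

/-- In a Frobenius group whose kernel `F` is a `p`-group of `p'`-index, any
normal subgroup not contained in the kernel contains the kernel. -/
lemma frobenius_dichotomy {GQ : Type} [Group GQ] [Finite GQ] {F C M : Subgroup GQ}
    (hfr : IsFrobeniusWith GQ F C) (hM : M.Normal) {p : ℕ} (hp : p.Prime)
    (hF : IsPGroup p F) (hpind : ¬ p ∣ F.index) (hne : ¬ M ≤ F) : F ≤ M := by
  haveI hFn : F.Normal := hfr.normal
  obtain ⟨x, hxM, hxF⟩ := SetLike.not_le_iff_exists.mp hne
  haveI := Fact.mk hp
  -- basic card facts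
  obtain ⟨k, hk⟩ := IsPGroup.iff_card.mp hF
  -- the element x has nontrivial image in GQ ⧸ F
  have hx1 : (x : GQ ⧸ F) ≠ 1 := by
    simpa [QuotientGroup.eq_one_iff] using hxF
  set D := orderOf (x : GQ ⧸ F) with hD
  have hD1 : D ≠ 1 := by simpa [hD, orderOf_eq_one_iff] using hx1
  have hDdvd : D ∣ F.index := orderOf_dvd_natCard _
  have hpD : ¬ p ∣ D := fun hpd => hpind (hpd.trans hDdvd)
  set r := D.minFac with hrdef
  have hr : r.Prime := Nat.minFac_prime hD1
  have hrD : r ∣ D := Nat.minFac_dvd D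
  have hrp : r ≠ p := fun h => hpD (h ▸ hrD)
  haveI := Fact.mk hr
  -- construct q ∈ M \ F of r-power order
  set d := orderOf x with hd
  have hd0 : d ≠ 0 := (orderOf_pos x).ne'
  set v := d.factorization r with hv
  set s := d / r ^ v with hs
  have hsd : s ∣ d := Nat.ordCompl_dvd d r
  have hrs : ¬ r ∣ s := Nat.not_dvd_ordCompl hr hd0
  have hds : r ^ v * s = d := Nat.ordProj_mul_ordCompl_eq_self d r
  have hs0 : s ≠ 0 := by
    intro h; rw [h, mul_zero] at hds; exact hd0 hds.symm
  set q := x ^ s with hq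
  have hqM : q ∈ M := pow_mem hxM s
  have horderq : orderOf q = r ^ v := by
    rw [hq, orderOf_pow, ← hd, Nat.gcd_eq_right hsd, ← hds, Nat.mul_div_cancel _ (Nat.pos_of_ne_zero hs0)]
  have hqF : q ∉ F := by
    intro hqF
    have : ((q : GQ) : GQ ⧸ F) = 1 := (QuotientGroup.eq_one_iff _).mpr hqF
    rw [hq] at this
    push_cast at this
    have : D ∣ s := orderOf_dvd_of_pow_eq_one this
    exact hrs (hrD.trans this)
  have hq1 : q ≠ 1 := fun h => hqF (h ▸ F.one_mem)
  -- Sylow r-subgroup of C is a Sylow r-subgroup of GQ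
  have hcard : Nat.card F * Nat.card C = Nat.card GQ := hfr.compl.card_mul_card
  have hcardF0 : Nat.card F ≠ 0 := Nat.card_pos.ne'
  have hcardC0 : Nat.card C ≠ 0 := Nat.card_pos.ne'
  have hrF : ¬ r ∣ Nat.card F := by
    rw [hk]
    intro hdvd
    exact hrp ((Nat.prime_dvd_prime_iff_eq hr hp).mp (hr.dvd_of_dvd_pow hdvd))
  have hfacGQ : (Nat.card GQ).factorization r = (Nat.card C).factorization r := by
    rw [← hcard, Nat.factorization_mul hcardF0 hcardC0, Finsupp.add_apply,
      Nat.factorization_eq_zero_of_not_dvd hrF, zero_add]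
  obtain ⟨S₀⟩ : Nonempty (Sylow r C) := inferInstance
  set Smap := (S₀ : Subgroup C).map C.subtype with hSmapdef
  have hSmapC : Smap ≤ C := Subgroup.map_subtype_le _
  have hSmapP : IsPGroup r Smap := S₀.2.map _
  have hcardSmap : Nat.card Smap = r ^ (Nat.card C).factorization r := by
    rw [← Sylow.card_eq_multiplicity S₀]
    exact (Nat.card_congr ((S₀ : Subgroup C).equivMapOfInjective C.subtype
      C.subtype_injective).toEquiv).symm
  obtain ⟨SS, hSS⟩ := hSmapP.exists_le_sylow
  have hSSeq : Smap = (SS : Subgroup GQ) := by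
    obtain ⟨b, hb⟩ := IsPGroup.iff_card.mp SS.2
    refine my_subgroup_eq_of_le_of_card_le hSS ?_
    rw [hb, hcardSmap, ← hfacGQ]
    have hble : b ≤ (Nat.card GQ).factorization r := by
      rw [← Nat.Prime.pow_dvd_iff_le_factorization hr Nat.card_pos.ne']
      exact hb ▸ SS.1.card_subgroup_dvd_card
    exact Nat.pow_le_pow_right hr.pos hble
  have hSSC : (SS : Subgroup GQ) ≤ C := hSSeq ▸ hSmapC
  -- q lies in some Sylow r-subgroup, conjugate to SS
  have hzq : IsPGroup r (Subgroup.zpowers q) := by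
    refine IsPGroup.of_card (n := v) ?_
    rw [Nat.card_zpowers, horderq]
  obtain ⟨T, hT⟩ := hzq.exists_le_sylow
  obtain ⟨g, hg⟩ := MulAction.exists_smul_eq GQ SS T
  have hqT : q ∈ (T : Subgroup GQ) := hT (Subgroup.mem_zpowers q)
  have hqC : g⁻¹ * q * g ∈ C := by
    apply hSSC
    rw [← hg] at hqT
    have : q ∈ MulAut.conj g • (SS : Subgroup GQ) := hqT
    rw [Subgroup.mem_pointwise_smul_iff_inv_smul_mem] at this
    simpa using this
  have hh1 : g⁻¹ * q * g ≠ 1 := by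
    intro h
    apply hq1
    have h2 : q = g * (g⁻¹ * q * g) * g⁻¹ := by group
    rw [h2, h]; group
  -- q commutes with no nontrivial element of F
  have hfpf : ∀ n ∈ F, n ≠ 1 → q * n ≠ n * q := by
    intro n hn hn1 hcomm
    have hn'F : g⁻¹ * n * g ∈ F := hFn.conj_mem' n hn g
    have hn'1 : g⁻¹ * n * g ≠ 1 := by
      intro h
      apply hn1
      have h2 : n = g * (g⁻¹ * n * g) * g⁻¹ := by group
      rw [h2, h]; group
    refine hfr.frob _ hqC hh1 _ hn'F hn'1 ?_
    calc g⁻¹ * q * g * (g⁻¹ * n * g) = g⁻¹ * (q * n) * g := by group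
      _ = g⁻¹ * (n * q) * g := by rw [hcomm]
      _ = (g⁻¹ * n * g) * (g⁻¹ * q * g) := by group
  -- counting map
  have hmemMF : ∀ n : F, q * (n : GQ) * q⁻¹ * (n : GQ)⁻¹ ∈ M ⊓ F := by
    intro n
    refine Subgroup.mem_inf.mpr ⟨?_, ?_⟩
    · have h1 : (n : GQ) * q⁻¹ * (n : GQ)⁻¹ ∈ M := hM.conj_mem q⁻¹ (inv_mem hqM) n
      rw [show q * (n : GQ) * q⁻¹ * (n : GQ)⁻¹ = q * ((n : GQ) * q⁻¹ * (n : GQ)⁻¹) by group]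
      exact mul_mem hqM h1
    · exact mul_mem (hFn.conj_mem _ n.2 q) (inv_mem n.2)
  have hinj : ∃ φ : F → ↥(M ⊓ F), Function.Injective φ := by
    refine ⟨fun n => ⟨q * (n : GQ) * q⁻¹ * (n : GQ)⁻¹, hmemMF n⟩, ?_⟩
    intro n n' heq
    have heq' : q * (n : GQ) * q⁻¹ * (n : GQ)⁻¹ = q * (n' : GQ) * q⁻¹ * (n' : GQ)⁻¹ :=
      congrArg Subtype.val heq
    apply Subtype.ext
    by_contra hne'
    have hc1 : (n' : GQ)⁻¹ * (n : GQ) ≠ 1 := by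
      intro h
      apply hne'
      have : (n : GQ) = (n' : GQ) := by
        rw [show (n : GQ) = (n' : GQ) * ((n' : GQ)⁻¹ * (n : GQ)) by group, h]; group
      exact this
    have hcF : (n' : GQ)⁻¹ * (n : GQ) ∈ F := mul_mem (inv_mem n'.2) n.2
    refine hfpf _ hcF hc1 ?_
    have e1 : q * ((n' : GQ)⁻¹ * (n : GQ)) * q⁻¹ = (n' : GQ)⁻¹ * (n : GQ) := by
      have e0 : (q * (n' : GQ)⁻¹ * q⁻¹) * (q * (n : GQ) * q⁻¹ * (n : GQ)⁻¹) * (n : GQ)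
          = (q * (n' : GQ)⁻¹ * q⁻¹) * (q * (n' : GQ) * q⁻¹ * (n' : GQ)⁻¹) * (n : GQ) := by
        rw [heq']
      calc q * ((n' : GQ)⁻¹ * (n : GQ)) * q⁻¹
          = (q * (n' : GQ)⁻¹ * q⁻¹) * (q * (n : GQ) * q⁻¹ * (n : GQ)⁻¹) * (n : GQ) := by group
        _ = (q * (n' : GQ)⁻¹ * q⁻¹) * (q * (n' : GQ) * q⁻¹ * (n' : GQ)⁻¹) * (n : GQ) := e0
        _ = (n' : GQ)⁻¹ * (n : GQ) := by group
    calc q * ((n' : GQ)⁻¹ * (n : GQ)) = (q * ((n' : GQ)⁻¹ * (n : GQ)) * q⁻¹) * q := by group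
      _ = ((n' : GQ)⁻¹ * (n : GQ)) * q := by rw [e1]
  obtain ⟨φ, hφ⟩ := hinj
  have hcardle : Nat.card F ≤ Nat.card ↥(M ⊓ F) := Nat.card_le_card_of_injective φ hφ
  have : M ⊓ F = F := my_subgroup_eq_of_le_of_card_le inf_le_right hcardle
  rw [← this]
  exact inf_le_left


theorem ker_coprime_aux
    (G : Type) [Group G] [Finite G] (p : ℕ) (hp : p.Prime)
    (P R N : Subgroup G) [P.Normal] [N.Normal]
    (hPp : IsPGroup p P) (hcompl : P.IsComplement' R) (hRp : ¬ p ∣ Nat.card R)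
    (hNmin : (N.Normal ∧ N ≠ ⊥ ∧ ∀ M : Subgroup G, M.Normal → M ≠ ⊥ → M ≤ N → M = N)) (hNP : N < P)
    (hquot : ∃ C : Subgroup (G ⧸ N),
      IsFrobeniusWith (G ⧸ N) (P.map (QuotientGroup.mk' N)) C)
    (hnd : ¬ ∃ L : Subgroup G, L ≤ P ∧ N ⊓ L = ⊥ ∧ N ⊔ L = P ∧
      ∀ x ∈ N, ∀ y ∈ L, x * y = y * x)
    (K : Subgroup G) (hKnorm : K.Normal) (hker : ¬ N ≤ K) :
    Nat.Coprime (Nat.card K) (Nat.card R) := by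
  haveI := Fact.mk hp
  -- N ⊓ K = ⊥
  have hNK : N ⊓ K = ⊥ := by
    by_contra hne
    have hnormNK : (N ⊓ K).Normal := by
      constructor
      intro n hn g
      rw [Subgroup.mem_inf] at hn ⊢
      exact ⟨‹N.Normal›.conj_mem n hn.1 g, hKnorm.conj_mem n hn.2 g⟩
    have := hNmin.2.2 (N ⊓ K) hnormNK hne inf_le_left
    exact hker (by rw [← this] at *; exact inf_le_right)
  set π := QuotientGroup.mk' N with hπ
  have hπsurj : Function.Surjective π := QuotientGroup.mk'_surjective N
  set F := P.map π with hFdef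
  obtain ⟨C, hC⟩ := hquot
  haveI hFnorm : F.Normal := hC.normal
  set M := K.map π with hMdef
  have hMnorm : M.Normal := hKnorm.map π hπsurj
  have hcomapF : Subgroup.comap π F = P := by
    rw [hFdef, Subgroup.comap_map_eq, QuotientGroup.ker_mk', sup_of_le_left hNP.le]
  have hcomapM : Subgroup.comap π M = K ⊔ N := by
    rw [hMdef, Subgroup.comap_map_eq, QuotientGroup.ker_mk']
  -- index of F equals card R
  have hFindex : F.index = Nat.card R := by
    set φ := (QuotientGroup.mk' F).comp π with hφdef
    have hφsurj : Function.Surjective φ :=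
      (QuotientGroup.mk'_surjective F).comp hπsurj
    have hkerφ : φ.ker = P := by
      rw [hφdef, ← MonoidHom.comap_ker, QuotientGroup.ker_mk', hcomapF]
    have e : (G ⧸ P) ≃* ((G ⧸ N) ⧸ F) :=
      (QuotientGroup.quotientMulEquivOfEq hkerφ.symm).trans
        (QuotientGroup.quotientKerEquivOfSurjective φ hφsurj)
    have h1 : F.index = Nat.card ((G ⧸ N) ⧸ F) := rfl
    have h2 : P.index = Nat.card (G ⧸ P) := rfl
    rw [h1, ← Nat.card_congr e.toEquiv, ← h2, hcompl.symm.index_eq_card]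
  have hpindF : ¬ p ∣ F.index := by rwa [hFindex]
  have hFp : IsPGroup p F := hPp.map π
  -- dichotomy
  have hKP : K ≤ P := by
    by_cases hMF : M ≤ F
    · have h0 : K ≤ Subgroup.comap π M := by
        rw [hMdef]; exact Subgroup.le_comap_map (f := π) K
      calc K ≤ Subgroup.comap π M := h0
        _ ≤ Subgroup.comap π F := Subgroup.comap_mono hMF
        _ = P := hcomapF
    · exfalso
      have hFM : F ≤ M := frobenius_dichotomy hC hMnorm hp hFp hpindF hMF
      have hPKN : P ≤ K ⊔ N := by
        calc P = Subgroup.comap π F := hcomapF.symm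
          _ ≤ Subgroup.comap π M := Subgroup.comap_mono hFM
          _ = K ⊔ N := hcomapM
      refine hnd ⟨K ⊓ P, inf_le_right, ?_, ?_, ?_⟩
      · rw [← inf_assoc, hNK, bot_inf_eq]
      · refine le_antisymm (sup_le hNP.le inf_le_right) ?_
        intro g hg
        have : g ∈ (K : Set G) * (N : Set G) := by
          rw [← Subgroup.mul_normal]
          exact hPKN hg
        obtain ⟨k, hk, n, hn, rfl⟩ := this
        have hkP : k ∈ P := by
          have : k = (k * n) * n⁻¹ := by group
          rw [this]
          exact mul_mem hg (inv_mem (hNP.le hn))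
        exact mul_mem (Subgroup.mem_sup_right (Subgroup.mem_inf.mpr ⟨hk, hkP⟩))
          (Subgroup.mem_sup_left hn)
      · intro x hx y hy
        have hcomm : x * y * x⁻¹ * y⁻¹ ∈ N ⊓ K := by
          refine Subgroup.mem_inf.mpr ⟨?_, ?_⟩
          · rw [show x * y * x⁻¹ * y⁻¹ = x * (y * x⁻¹ * y⁻¹) by group]
            exact mul_mem hx (‹N.Normal›.conj_mem _ (inv_mem hx) y)
          · rw [show x * y * x⁻¹ * y⁻¹ = (x * y * x⁻¹) * y⁻¹ by group]
            exact mul_mem (hKnorm.conj_mem _ hy.1 x) (inv_mem hy.1)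
        rw [hNK, Subgroup.mem_bot] at hcomm
        have : x * y = (x * y * x⁻¹ * y⁻¹) * (y * x) := by group
        rw [this, hcomm, one_mul]
  -- conclude
  have hKpgroup : IsPGroup p K := hPp.to_le hKP
  obtain ⟨k, hk⟩ := IsPGroup.iff_card.mp hKpgroup
  rw [hk]
  exact Nat.Coprime.pow_left _ ((Nat.Prime.coprime_iff_not_dvd hp).mpr hRp)

/-- Lemma 2.11(1). -/
theorem ker_coprime_hall_of_not_direct_factor
    (G : Type) [Group G] [Finite G] (p : ℕ) (hp : p.Prime)
    (P R N : Subgroup G) [P.Normal] [N.Normal]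
    (hPp : IsPGroup p P) (hcompl : P.IsComplement' R) (hRp : ¬ p ∣ Nat.card R)
    (hNmin : IsMinimalNormal G N) (hNP : N < P)
    (hquot : ∃ C : Subgroup (G ⧸ N),
      IsFrobeniusWith (G ⧸ N) (P.map (QuotientGroup.mk' N)) C)
    (hnd : ¬ ∃ L : Subgroup G, L ≤ P ∧ N ⊓ L = ⊥ ∧ N ⊔ L = P ∧
      ∀ x ∈ N, ∀ y ∈ L, x * y = y * x)
    (V : FDRep ℂ G) (hV : Simple V) (hker : ¬ N ≤ repKer G V) :
    Nat.Coprime (Nat.card (repKer G V)) (Nat.card R) := by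
  have hKnorm : (repKer G V).Normal := MonoidHom.normal_ker _
  exact ker_coprime_aux G p hp P R N hPp hcompl hRp ⟨hNmin.1, hNmin.2.1, hNmin.2.2⟩ hNP hquot
    hnd (repKer G V) hKnorm hker
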